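/- Let u : ℝ → ℝ be a bounded continuous function and define on the upper half-plane H the functions a(ρ,η) = (ρ/2) ∫_ℝ (y−η)(ρ² + (η−y)²)^{−3/2} u(y) dy and b(ρ,η) = (ρ²/2) ∫_ℝ (ρ² + (η−y)²)^{−3/2} u(y) dy. Then a and b are continuously differentiable on H and the pair (a,b) satisfies the Joyce equation: ρ(∂a/∂ρ + ∂b/∂η) = a and ∂a/∂η = ∂b/∂ρ at every point of H. -/

import Mathlib

open MeasureTheory

/-- Partial derivative in the first variable (ρ). -/
noncomputable def pdr (f : ℝ → ℝ → ℝ) (ρ η : ℝ) : ℝ := deriv (fun r => f r η) ρ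

/-- Partial derivative in the second variable (η). -/
noncomputable def pde (f : ℝ → ℝ → ℝ) (ρ η : ℝ) : ℝ := deriv (fun e => f ρ e) η

/-- First component of the smeared Joyce solution attached to the density u. -/
noncomputable def smearedA (u : ℝ → ℝ) (ρ η : ℝ) : ℝ :=
  ρ / 2 * ∫ y : ℝ, (y - η) * (ρ ^ 2 + (η - y) ^ 2) ^ (-(3 : ℝ) / 2) * u y

/-- Second component of the smeared Joyce solution attached to the density u. -/
noncomputable def smearedB (u : ℝ → ℝ) (ρ η : ℝ) : ℝ :=
  ρ ^ 2 / 2 * ∫ y : ℝ, (ρ ^ 2 + (η - y) ^ 2) ^ (-(3 : ℝ) / 2) * u y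

noncomputable section JoyceAux
namespace JoyceAux
def qq (p : ℝ × ℝ) (y : ℝ) : ℝ := p.1 ^ 2 + (p.2 - y) ^ 2

def fstL : ℝ × ℝ →L[ℝ] ℝ := ContinuousLinearMap.fst ℝ ℝ ℝ
def sndL : ℝ × ℝ →L[ℝ] ℝ := ContinuousLinearMap.snd ℝ ℝ ℝ

def KA (u : ℝ → ℝ) (p : ℝ × ℝ) (y : ℝ) : ℝ :=
  p.1 / 2 * ((y - p.2) * qq p y ^ (-(3 : ℝ) / 2) * u y)

def KB (u : ℝ → ℝ) (p : ℝ × ℝ) (y : ℝ) : ℝ :=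
  p.1 ^ 2 / 2 * (qq p y ^ (-(3 : ℝ) / 2) * u y)

def Ar (u : ℝ → ℝ) (p : ℝ × ℝ) (y : ℝ) : ℝ :=
  (y - p.2) * (qq p y ^ (-(3 : ℝ) / 2) / 2 - 3 / 2 * p.1 ^ 2 * qq p y ^ (-(5 : ℝ) / 2)) * u y

def Ae (u : ℝ → ℝ) (p : ℝ × ℝ) (y : ℝ) : ℝ :=
  p.1 / 2 * (-(qq p y ^ (-(3 : ℝ) / 2)) + 3 * (p.2 - y) ^ 2 * qq p y ^ (-(5 : ℝ) / 2)) * u y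

def Br (u : ℝ → ℝ) (p : ℝ × ℝ) (y : ℝ) : ℝ :=
  (p.1 * qq p y ^ (-(3 : ℝ) / 2) - 3 / 2 * p.1 ^ 3 * qq p y ^ (-(5 : ℝ) / 2)) * u y

def Be (u : ℝ → ℝ) (p : ℝ × ℝ) (y : ℝ) : ℝ :=
  p.1 ^ 2 / 2 * (-3 * (p.2 - y)) * qq p y ^ (-(5 : ℝ) / 2) * u y

def FA (u : ℝ → ℝ) (p : ℝ × ℝ) (y : ℝ) : ℝ × ℝ →L[ℝ] ℝ := Ar u p y • fstL + Ae u p y • sndL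
def FB (u : ℝ → ℝ) (p : ℝ × ℝ) (y : ℝ) : ℝ × ℝ →L[ℝ] ℝ := Br u p y • fstL + Be u p y • sndL

lemma qq_pos {p : ℝ × ℝ} (hp : p.1 ≠ 0) (y : ℝ) : 0 < qq p y := by
  have h1 : 0 < p.1 ^ 2 := by positivity
  have h2 : 0 ≤ (p.2 - y) ^ 2 := sq_nonneg _
  unfold qq; linarith

@[simp] lemma comb_apply (a b : ℝ) (v : ℝ × ℝ) :
    (a • fstL + b • sndL) v = a * v.1 + b * v.2 := by
  simp [fstL, sndL, mul_comm]

lemma norm_comb_le (a b : ℝ) : ‖a • fstL + b • sndL‖ ≤ |a| + |b| := by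
  refine ContinuousLinearMap.opNorm_le_bound _ (by positivity) fun v => ?_
  rw [comb_apply]
  have h1 : |a * v.1 + b * v.2| ≤ |a| * |v.1| + |b| * |v.2| :=
    (abs_add_le _ _).trans (by rw [abs_mul, abs_mul])
  have h2 : |v.1| ≤ ‖v‖ := by rw [← Real.norm_eq_abs]; exact norm_fst_le v
  have h3 : |v.2| ≤ ‖v‖ := by rw [← Real.norm_eq_abs]; exact norm_snd_le v
  have h4 := add_le_add (mul_le_mul_of_nonneg_left h2 (abs_nonneg a))
    (mul_le_mul_of_nonneg_left h3 (abs_nonneg b))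
  rw [Real.norm_eq_abs (a * v.1 + b * v.2)]
  calc |a * v.1 + b * v.2| ≤ |a| * |v.1| + |b| * |v.2| := h1
    _ ≤ |a| * ‖v‖ + |b| * ‖v‖ := h4
    _ = (|a| + |b|) * ‖v‖ := by ring

lemma mul_le_mul₄ {a b c d A B C D : ℝ} (ha : 0 ≤ a) (hb : 0 ≤ b) (hc : 0 ≤ c) (hd : 0 ≤ d)
    (hA : a ≤ A) (hB : b ≤ B) (hC : c ≤ C) (hD : d ≤ D) : a * b * c * d ≤ A * B * C * D := by
  have h1 : a * b ≤ A * B := mul_le_mul hA hB hb (ha.trans hA)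
  have h2 : a * b * c ≤ A * B * C :=
    mul_le_mul h1 hC hc (mul_nonneg (ha.trans hA) (hb.trans hB))
  exact mul_le_mul h2 hD hd
    (mul_nonneg (mul_nonneg (ha.trans hA) (hb.trans hB)) (hc.trans hC))

lemma shape (t : ℝ) :
    (1 + |t|) * (1 + t ^ 2) ^ (-(3 : ℝ) / 2) ≤ 2 * (1 + t ^ 2) ^ (-(2 : ℝ) / 2) := by
  have h1 : (0 : ℝ) < 1 + t ^ 2 := by positivity
  have e1 : (1 + t ^ 2) ^ (-(3 : ℝ) / 2)
      = (1 + t ^ 2) ^ (-(1 : ℝ) / 2) * (1 + t ^ 2) ^ (-(2 : ℝ) / 2) := by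
    rw [← Real.rpow_add h1]; norm_num
  have key : (1 + |t|) * (1 + t ^ 2) ^ (-(1 : ℝ) / 2) ≤ 2 := by
    have hs : (1 + t ^ 2) ^ (-(1 : ℝ) / 2) = (Real.sqrt (1 + t ^ 2))⁻¹ := by
      rw [show (-(1 : ℝ) / 2) = -(1 / 2 : ℝ) by norm_num, Real.rpow_neg h1.le,
        ← Real.sqrt_eq_rpow]
    have hsp : 0 < Real.sqrt (1 + t ^ 2) := Real.sqrt_pos.mpr h1
    have h4 : 1 + |t| ≤ 2 * Real.sqrt (1 + t ^ 2) := by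
      have h5 : 1 + |t| ≤ Real.sqrt (4 * (1 + t ^ 2)) := by
        rw [Real.le_sqrt (by positivity) (by positivity)]
        nlinarith [sq_abs t, sq_nonneg (|t| - 1)]
      have h6 : Real.sqrt (4 * (1 + t ^ 2)) = 2 * Real.sqrt (1 + t ^ 2) := by
        rw [show (4 : ℝ) * (1 + t ^ 2) = 2 ^ 2 * (1 + t ^ 2) by ring,
          Real.sqrt_mul (by positivity), Real.sqrt_sq (by norm_num)]
      linarith [h6 ▸ h5]
    rw [hs, mul_comm, ← div_eq_inv_mul, div_le_iff₀ hsp]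
    linarith
  calc (1 + |t|) * (1 + t ^ 2) ^ (-(3 : ℝ) / 2)
      = (1 + |t|) * (1 + t ^ 2) ^ (-(1 : ℝ) / 2) * (1 + t ^ 2) ^ (-(2 : ℝ) / 2) := by
        rw [e1]; ring
    _ ≤ 2 * (1 + t ^ 2) ^ (-(2 : ℝ) / 2) :=
        mul_le_mul_of_nonneg_right key (Real.rpow_nonneg h1.le _)

lemma assemble {s Z c D : ℝ} (hc : 0 ≤ c) (hD : 0 ≤ D)
    (hZ : Z ≤ D * (1 + s ^ 2) ^ (-(3 : ℝ) / 2)) :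
    c * ((1 + |s|) * Z) ≤ 2 * c * D * (1 + s ^ 2) ^ (-(2 : ℝ) / 2) := by
  have hs0 : (0 : ℝ) ≤ 1 + |s| := by positivity
  have h1 : (1 + |s|) * Z ≤ (1 + |s|) * (D * (1 + s ^ 2) ^ (-(3 : ℝ) / 2)) :=
    mul_le_mul_of_nonneg_left hZ hs0
  have h2 := shape s
  have h3 : D * ((1 + |s|) * (1 + s ^ 2) ^ (-(3 : ℝ) / 2))
      ≤ D * (2 * (1 + s ^ 2) ^ (-(2 : ℝ) / 2)) := mul_le_mul_of_nonneg_left h2 hD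
  calc c * ((1 + |s|) * Z) ≤ c * ((1 + |s|) * (D * (1 + s ^ 2) ^ (-(3 : ℝ) / 2))) :=
        mul_le_mul_of_nonneg_left h1 hc
    _ = c * (D * ((1 + |s|) * (1 + s ^ 2) ^ (-(3 : ℝ) / 2))) := by ring
    _ ≤ c * (D * (2 * (1 + s ^ 2) ^ (-(2 : ℝ) / 2))) := mul_le_mul_of_nonneg_left h3 hc
    _ = 2 * c * D * (1 + s ^ 2) ^ (-(2 : ℝ) / 2) := by ring

lemma qq_lower {p₀ : ℝ × ℝ} (h : 0 < p₀.1) {p : ℝ × ℝ}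
    (hp : p ∈ Metric.ball p₀ (p₀.1 / 4)) (y : ℝ) :
    min (p₀.1 ^ 2) 1 / 2 * (1 + (y - p₀.2) ^ 2) ≤ qq p y := by
  rw [Metric.mem_ball, Prod.dist_eq, max_lt_iff, Real.dist_eq, Real.dist_eq] at hp
  obtain ⟨h1, h2⟩ := hp
  rw [abs_lt] at h1 h2
  have hm1 : min (p₀.1 ^ 2) 1 ≤ p₀.1 ^ 2 := min_le_left _ _
  have hm2 : min (p₀.1 ^ 2) 1 ≤ 1 := min_le_right _ _
  unfold qq
  nlinarith [sq_nonneg ((y - p₀.2) - 2 * (p.2 - p₀.2)), sq_nonneg (y - p₀.2),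
    mul_le_mul_of_nonneg_right hm2 (sq_nonneg (y - p₀.2)), h1.1, h1.2, h2.1, h2.2]

lemma ball_facts {p₀ : ℝ × ℝ} (h : 0 < p₀.1) {p : ℝ × ℝ}
    (hp : p ∈ Metric.ball p₀ (p₀.1 / 4)) :
    3 * p₀.1 / 4 ≤ p.1 ∧ p.1 ≤ 2 * p₀.1 ∧ |p.2 - p₀.2| ≤ p₀.1 / 4 := by
  rw [Metric.mem_ball, Prod.dist_eq, max_lt_iff, Real.dist_eq, Real.dist_eq] at hp
  obtain ⟨h1, h2⟩ := hp
  rw [abs_lt] at h1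
  exact ⟨by linarith, by linarith, by rw [abs_le]; constructor <;> nlinarith [abs_lt.mp h2]⟩

def DD (p₀ : ℝ × ℝ) : ℝ :=
  (min (p₀.1 ^ 2) 1 / 2) ^ (-(3 : ℝ) / 2) + (min (p₀.1 ^ 2) 1 / 2) ^ (-(5 : ℝ) / 2)

lemma DD_nonneg (p₀ : ℝ × ℝ) : 0 ≤ DD p₀ :=
  add_nonneg (Real.rpow_nonneg (by positivity) _) (Real.rpow_nonneg (by positivity) _)

lemma XY_le {p₀ : ℝ × ℝ} (h : 0 < p₀.1) {p : ℝ × ℝ}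
    (hp : p ∈ Metric.ball p₀ (p₀.1 / 4)) (y : ℝ) :
    qq p y ^ (-(3 : ℝ) / 2) + qq p y ^ (-(5 : ℝ) / 2)
      ≤ DD p₀ * (1 + (y - p₀.2) ^ 2) ^ (-(3 : ℝ) / 2) := by
  set δ := min (p₀.1 ^ 2) 1 / 2 with hδdef
  have hδ : 0 < δ := by
    have : (0:ℝ) < min (p₀.1 ^ 2) 1 := lt_min (by positivity) one_pos
    rw [hδdef]; linarith
  set w := 1 + (y - p₀.2) ^ 2 with hwdef
  have hw1 : (1 : ℝ) ≤ w := by rw [hwdef]; nlinarith [sq_nonneg (y - p₀.2)]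
  have hw0 : (0 : ℝ) < w := by linarith
  have hlow : δ * w ≤ qq p y := qq_lower h hp y
  have hdw : 0 < δ * w := by positivity
  have key : ∀ e : ℝ, e ≤ 0 → qq p y ^ e ≤ δ ^ e * w ^ e := fun e he => by
    calc qq p y ^ e ≤ (δ * w) ^ e := Real.rpow_le_rpow_of_nonpos hdw hlow he
      _ = δ ^ e * w ^ e := Real.mul_rpow hδ.le hw0.le
  have h3 := key (-(3 : ℝ) / 2) (by norm_num)
  have h5 := key (-(5 : ℝ) / 2) (by norm_num)
  have hw53 : w ^ (-(5 : ℝ) / 2) ≤ w ^ (-(3 : ℝ) / 2) :=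
    Real.rpow_le_rpow_of_exponent_le hw1 (by norm_num)
  have hδ5 : 0 ≤ δ ^ (-(5 : ℝ) / 2) := Real.rpow_nonneg hδ.le _
  have := mul_le_mul_of_nonneg_left hw53 hδ5
  unfold DD
  rw [← hδdef]
  nlinarith [Real.rpow_nonneg hw0.le (-(3:ℝ)/2)]
lemma hasFDerivAt_qq (p : ℝ × ℝ) (y : ℝ) :
    HasFDerivAt (fun p => qq p y) ((2 * p.1) • fstL + (2 * (p.2 - y)) • sndL) p := by
  have h1 : HasFDerivAt (fun p : ℝ × ℝ => p.1) fstL p := hasFDerivAt_fst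
  have h2 : HasFDerivAt (fun p : ℝ × ℝ => p.2 - y) sndL p := hasFDerivAt_snd.sub_const y
  have key := (h1.mul h1).add (h2.mul h2)
  have heq : (fun p : ℝ × ℝ => qq p y) = fun p => p.1 * p.1 + (p.2 - y) * (p.2 - y) := by
    funext p; unfold qq; ring
  rw [heq]
  refine key.congr_fderiv ?_
  ext <;> simp [fstL, sndL] <;> ring

lemma hasFDerivAt_rpow_qq {p : ℝ × ℝ} (hp : p.1 ≠ 0) (y : ℝ) (e : ℝ) :
    HasFDerivAt (fun p => qq p y ^ e)
      ((e * qq p y ^ (e - 1)) • ((2 * p.1) • fstL + (2 * (p.2 - y)) • sndL)) p := by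
  have hq := (qq_pos hp y).ne'
  exact (Real.hasDerivAt_rpow_const (Or.inl hq)).comp_hasFDerivAt p (hasFDerivAt_qq p y)

lemma hasFDerivAt_KA (u : ℝ → ℝ) {p : ℝ × ℝ} (hp : p.1 ≠ 0) (y : ℝ) :
    HasFDerivAt (fun p => KA u p y) (FA u p y) p := by
  have h3 := hasFDerivAt_rpow_qq hp y (-(3 : ℝ) / 2)
  rw [show (-(3 : ℝ) / 2 - 1) = -(5 : ℝ) / 2 by norm_num] at h3
  have h2 : HasFDerivAt (fun p : ℝ × ℝ => y - p.2) (-sndL) p := hasFDerivAt_snd.const_sub y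
  have h1 : HasFDerivAt (fun p : ℝ × ℝ => p.1 / 2) ((2 : ℝ)⁻¹ • fstL) p := by
    have := hasFDerivAt_fst (p := p) (𝕜 := ℝ)
    simpa [div_eq_inv_mul, smul_smul, fstL] using this.const_mul (2 : ℝ)⁻¹
  have key := h1.mul ((h2.mul h3).mul_const (u y))
  have heq : (fun p : ℝ × ℝ => KA u p y)
      = fun p : ℝ × ℝ => p.1 / 2 * ((y - p.2) * qq p y ^ (-(3 : ℝ) / 2) * u y) := rfl
  rw [heq]
  refine key.congr_fderiv ?_
  ext <;> simp [FA, Ar, Ae, fstL, sndL] <;> ring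

lemma hasFDerivAt_KB (u : ℝ → ℝ) {p : ℝ × ℝ} (hp : p.1 ≠ 0) (y : ℝ) :
    HasFDerivAt (fun p => KB u p y) (FB u p y) p := by
  have h3 := hasFDerivAt_rpow_qq hp y (-(3 : ℝ) / 2)
  rw [show (-(3 : ℝ) / 2 - 1) = -(5 : ℝ) / 2 by norm_num] at h3
  have h1 : HasFDerivAt (fun p : ℝ × ℝ => p.1 ^ 2 / 2) (p.1 • fstL) p := by
    have h0 : HasFDerivAt (fun p : ℝ × ℝ => p.1) fstL p := hasFDerivAt_fst
    have := (h0.mul h0).const_mul (2 : ℝ)⁻¹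
    have heq : (fun p : ℝ × ℝ => p.1 ^ 2 / 2) = fun p : ℝ × ℝ => 2⁻¹ * (p.1 * p.1) := by
      funext p; ring
    rw [heq]
    refine this.congr_fderiv ?_
    ext <;> simp [fstL] <;> ring
  have key := h1.mul (h3.mul_const (u y))
  have heq : (fun p : ℝ × ℝ => KB u p y)
      = fun p : ℝ × ℝ => p.1 ^ 2 / 2 * (qq p y ^ (-(3 : ℝ) / 2) * u y) := rfl
  rw [heq]
  refine key.congr_fderiv ?_
  ext <;> simp [FB, Br, Be, fstL, sndL] <;> ring

set_option maxHeartbeats 1000000 in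
lemma all_bounds (u : ℝ → ℝ) {C : ℝ} (hC : ∀ y, |u y| ≤ C) {p₀ : ℝ × ℝ} (h : 0 < p₀.1) :
    ∃ M : ℝ, 0 ≤ M ∧ ∀ p ∈ Metric.ball p₀ (p₀.1 / 4), ∀ y : ℝ,
      |KA u p y| ≤ M * (1 + (y - p₀.2) ^ 2) ^ (-(2 : ℝ) / 2) ∧
      |KB u p y| ≤ M * (1 + (y - p₀.2) ^ 2) ^ (-(2 : ℝ) / 2) ∧
      ‖FA u p y‖ ≤ M * (1 + (y - p₀.2) ^ 2) ^ (-(2 : ℝ) / 2) ∧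
      ‖FB u p y‖ ≤ M * (1 + (y - p₀.2) ^ 2) ^ (-(2 : ℝ) / 2) := by
  have hC0 : 0 ≤ C := (abs_nonneg _).trans (hC 0)
  set ρ := p₀.1 with hρdef
  set D := DD p₀ with hDdef
  have hD0 : 0 ≤ D := DD_nonneg p₀
  set c1 : ℝ := ρ * (1 + ρ) * C with hc1def
  set c2 : ℝ := 2 * ρ ^ 2 * C with hc2def
  set c3 : ℝ := (1 + ρ) * (1 / 2 + 6 * ρ ^ 2) * C with hc3def
  set c4 : ℝ := 4 * ρ * C with hc4def
  set c5 : ℝ := (2 * ρ + 12 * ρ ^ 3) * C with hc5def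
  set c6 : ℝ := 6 * ρ ^ 2 * (1 + ρ) * C with hc6def
  have hρ0 : 0 < ρ := h
  have hc1 : 0 ≤ c1 := by rw [hc1def]; positivity
  have hc2 : 0 ≤ c2 := by rw [hc2def]; positivity
  have hc3 : 0 ≤ c3 := by rw [hc3def]; positivity
  have hc4 : 0 ≤ c4 := by rw [hc4def]; positivity
  have hc5 : 0 ≤ c5 := by rw [hc5def]; positivity
  have hc6 : 0 ≤ c6 := by rw [hc6def]; positivity
  refine ⟨2 * (c1 + c2 + c3 + c4 + c5 + c6) * D, by positivity, fun p hp y => ?_⟩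
  obtain ⟨hp1, hp2, hz⟩ := ball_facts h hp
  have hp0 : 0 < p.1 := by linarith
  have hq := qq_pos hp0.ne' y
  set s := y - p₀.2 with hsdef
  set X := qq p y ^ (-(3 : ℝ) / 2) with hXdef
  set Y := qq p y ^ (-(5 : ℝ) / 2) with hYdef
  set sh := (1 + s ^ 2) ^ (-(2 : ℝ) / 2) with hshdef
  have hX0 : 0 ≤ X := Real.rpow_nonneg hq.le _
  have hY0 : 0 ≤ Y := Real.rpow_nonneg hq.le _
  have hsh0 : (0 : ℝ) ≤ sh := Real.rpow_nonneg (by positivity) _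
  have hXY : X + Y ≤ D * (1 + s ^ 2) ^ (-(3 : ℝ) / 2) := XY_le h hp y
  have habs0 : (0 : ℝ) ≤ |s| := abs_nonneg _
  have hyp : |y - p.2| ≤ (1 + ρ) * (1 + |s|) := by
    have t3 : |y - p.2| ≤ |s| + |p.2 - p₀.2| := by
      rw [hsdef, abs_sub_comm p.2 p₀.2]; exact abs_sub_le y p₀.2 p.2
    have t4 : (0:ℝ) ≤ ρ * |s| := mul_nonneg hρ0.le habs0
    linarith [t3, hz, t4]
  have hsq : p.1 ^ 2 ≤ 4 * ρ ^ 2 := by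
    nlinarith [mul_le_mul hp2 hp2 hp0.le (by positivity : (0:ℝ) ≤ 2 * ρ)]
  have hcube : p.1 ^ 3 ≤ 8 * ρ ^ 3 := by
    nlinarith [mul_le_mul hsq hp2 hp0.le (by positivity : (0:ℝ) ≤ 4 * ρ ^ 2), sq_nonneg p.1]
  have hqY : (p.2 - y) ^ 2 * Y ≤ X := by
    have key : qq p y * Y = X := by
      rw [hYdef, hXdef]
      rw [← Real.rpow_one_add' hq.le (by norm_num : (1 : ℝ) + -(5:ℝ)/2 ≠ 0)]
      norm_num
    have hle : (p.2 - y) ^ 2 ≤ qq p y := by unfold qq; nlinarith [sq_nonneg p.1]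
    calc (p.2 - y) ^ 2 * Y ≤ qq p y * Y := mul_le_mul_of_nonneg_right hle hY0
      _ = X := key
  -- KA
  have bKA : |KA u p y| ≤ 2 * c1 * D * sh := by
    have e1 : |KA u p y| = p.1 / 2 * |y - p.2| * X * |u y| := by
      simp only [KA, ← hXdef, abs_mul]
      rw [abs_of_nonneg (by linarith : (0:ℝ) ≤ p.1 / 2), abs_of_nonneg hX0]
      ring
    calc |KA u p y| = p.1 / 2 * |y - p.2| * X * |u y| := e1
      _ ≤ ρ * ((1 + ρ) * (1 + |s|)) * (X + Y) * C :=
          mul_le_mul₄ (by linarith) (abs_nonneg _) hX0 (abs_nonneg _)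
            (by linarith) hyp (by linarith) (hC y)
      _ = c1 * ((1 + |s|) * (X + Y)) := by rw [hc1def]; ring
      _ ≤ 2 * c1 * D * sh := by rw [hshdef]; exact assemble hc1 hD0 hXY
  -- KB
  have bKB : |KB u p y| ≤ 2 * c2 * D * sh := by
    have e1 : |KB u p y| = p.1 ^ 2 / 2 * 1 * X * |u y| := by
      simp only [KB, ← hXdef, abs_mul]
      rw [abs_of_nonneg (by positivity : (0:ℝ) ≤ p.1 ^ 2 / 2), abs_of_nonneg hX0]
      ring
    calc |KB u p y| = p.1 ^ 2 / 2 * 1 * X * |u y| := e1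
      _ ≤ 2 * ρ ^ 2 * (1 + |s|) * (X + Y) * C :=
          mul_le_mul₄ (by positivity) zero_le_one hX0 (abs_nonneg _)
            (by linarith [hsq]) (by linarith) (by linarith) (hC y)
      _ = c2 * ((1 + |s|) * (X + Y)) := by rw [hc2def]; ring
      _ ≤ 2 * c2 * D * sh := by rw [hshdef]; exact assemble hc2 hD0 hXY
  -- Ar
  have bAr : |Ar u p y| ≤ 2 * c3 * D * sh := by
    have hmid : |X / 2 - 3 / 2 * p.1 ^ 2 * Y| ≤ (1 / 2 + 6 * ρ ^ 2) * (X + Y) := by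
      have t1 : |X / 2 - 3 / 2 * p.1 ^ 2 * Y| ≤ |X / 2| + |3 / 2 * p.1 ^ 2 * Y| := abs_sub _ _
      rw [abs_of_nonneg (by linarith : (0:ℝ) ≤ X / 2),
        abs_of_nonneg (by positivity : (0:ℝ) ≤ 3 / 2 * p.1 ^ 2 * Y)] at t1
      linarith [mul_le_mul_of_nonneg_right hsq hY0, mul_nonneg (mul_nonneg hρ0.le hρ0.le) hX0,
        mul_nonneg (mul_nonneg hρ0.le hρ0.le) hY0]
    have e1 : |Ar u p y| = |y - p.2| * |X / 2 - 3 / 2 * p.1 ^ 2 * Y| * |u y| * 1 := by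
      simp only [Ar, ← hXdef, ← hYdef, abs_mul]; ring
    calc |Ar u p y| = |y - p.2| * |X / 2 - 3 / 2 * p.1 ^ 2 * Y| * |u y| * 1 := e1
      _ ≤ ((1 + ρ) * (1 + |s|)) * ((1 / 2 + 6 * ρ ^ 2) * (X + Y)) * C * 1 :=
          mul_le_mul₄ (abs_nonneg _) (abs_nonneg _) (abs_nonneg _) zero_le_one
            hyp hmid (hC y) le_rfl
      _ = c3 * ((1 + |s|) * (X + Y)) := by rw [hc3def]; ring
      _ ≤ 2 * c3 * D * sh := by rw [hshdef]; exact assemble hc3 hD0 hXY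
  -- Ae
  have bAe : |Ae u p y| ≤ 2 * c4 * D * sh := by
    have hmid : |-X + 3 * (p.2 - y) ^ 2 * Y| ≤ 4 * (X + Y) := by
      have t1 : |-X + 3 * (p.2 - y) ^ 2 * Y| ≤ |(-X : ℝ)| + |3 * (p.2 - y) ^ 2 * Y| :=
        abs_add_le _ _
      rw [abs_neg, abs_of_nonneg hX0,
        abs_of_nonneg (by positivity : (0:ℝ) ≤ 3 * (p.2 - y) ^ 2 * Y)] at t1
      linarith [t1, hqY, hY0]
    have e1 : |Ae u p y| = p.1 / 2 * |-X + 3 * (p.2 - y) ^ 2 * Y| * |u y| * 1 := by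
      simp only [Ae, ← hXdef, ← hYdef, abs_mul]
      rw [abs_of_nonneg (by linarith : (0:ℝ) ≤ p.1 / 2)]
      ring
    calc |Ae u p y| = p.1 / 2 * |-X + 3 * (p.2 - y) ^ 2 * Y| * |u y| * 1 := e1
      _ ≤ ρ * (4 * (X + Y)) * C * (1 + |s|) :=
          mul_le_mul₄ (by linarith) (abs_nonneg _) (abs_nonneg _) zero_le_one
            (by linarith) hmid (hC y) (by linarith)
      _ = c4 * ((1 + |s|) * (X + Y)) := by rw [hc4def]; ring
      _ ≤ 2 * c4 * D * sh := by rw [hshdef]; exact assemble hc4 hD0 hXY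
  -- Br
  have bBr : |Br u p y| ≤ 2 * c5 * D * sh := by
    have hmid : |p.1 * X - 3 / 2 * p.1 ^ 3 * Y| ≤ (2 * ρ + 12 * ρ ^ 3) * (X + Y) := by
      have t1 : |p.1 * X - 3 / 2 * p.1 ^ 3 * Y| ≤ |p.1 * X| + |3 / 2 * p.1 ^ 3 * Y| :=
        abs_sub _ _
      rw [abs_of_nonneg (mul_nonneg hp0.le hX0),
        abs_of_nonneg (by positivity : (0:ℝ) ≤ 3 / 2 * p.1 ^ 3 * Y)] at t1
      linarith [mul_le_mul_of_nonneg_right hcube hY0, mul_le_mul_of_nonneg_right hp2 hX0,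
        mul_nonneg (mul_nonneg (mul_nonneg hρ0.le hρ0.le) hρ0.le) hY0,
        mul_nonneg (mul_nonneg (mul_nonneg hρ0.le hρ0.le) hρ0.le) hX0,
        mul_nonneg hρ0.le hY0, mul_nonneg hρ0.le hX0]
    have e1 : |Br u p y| = |p.1 * X - 3 / 2 * p.1 ^ 3 * Y| * |u y| * 1 * 1 := by
      simp only [Br, ← hXdef, ← hYdef, abs_mul]; ring
    calc |Br u p y| = |p.1 * X - 3 / 2 * p.1 ^ 3 * Y| * |u y| * 1 * 1 := e1
      _ ≤ ((2 * ρ + 12 * ρ ^ 3) * (X + Y)) * C * (1 + |s|) * 1 :=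
          mul_le_mul₄ (abs_nonneg _) (abs_nonneg _) zero_le_one zero_le_one
            hmid (hC y) (by linarith) le_rfl
      _ = c5 * ((1 + |s|) * (X + Y)) := by rw [hc5def]; ring
      _ ≤ 2 * c5 * D * sh := by rw [hshdef]; exact assemble hc5 hD0 hXY
  -- Be
  have bBe : |Be u p y| ≤ 2 * c6 * D * sh := by
    have hmid : |(-3 : ℝ) * (p.2 - y)| ≤ 3 * ((1 + ρ) * (1 + |s|)) := by
      rw [abs_mul, abs_sub_comm p.2 y, show |(-3 : ℝ)| = 3 by norm_num]
      linarith [hyp, mul_nonneg hρ0.le habs0]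
    have e1 : |Be u p y| = p.1 ^ 2 / 2 * |(-3 : ℝ) * (p.2 - y)| * Y * |u y| := by
      simp only [Be, ← hYdef, abs_mul]
      rw [abs_of_nonneg (by positivity : (0:ℝ) ≤ p.1 ^ 2 / 2), abs_of_nonneg hY0]
    calc |Be u p y| = p.1 ^ 2 / 2 * |(-3 : ℝ) * (p.2 - y)| * Y * |u y| := e1
      _ ≤ 2 * ρ ^ 2 * (3 * ((1 + ρ) * (1 + |s|))) * (X + Y) * C :=
          mul_le_mul₄ (by positivity) (abs_nonneg _) hY0 (abs_nonneg _)
            (by linarith [hsq]) hmid (by linarith) (hC y)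
      _ = c6 * ((1 + |s|) * (X + Y)) := by rw [hc6def]; ring
      _ ≤ 2 * c6 * D * sh := by rw [hshdef]; exact assemble hc6 hD0 hXY
  -- combine
  have hM1 : 2 * c1 * D ≤ 2 * (c1 + c2 + c3 + c4 + c5 + c6) * D := by
    linarith [mul_nonneg hc2 hD0, mul_nonneg hc3 hD0, mul_nonneg hc4 hD0,
      mul_nonneg hc5 hD0, mul_nonneg hc6 hD0]
  have hM2 : 2 * c2 * D ≤ 2 * (c1 + c2 + c3 + c4 + c5 + c6) * D := by
    linarith [mul_nonneg hc1 hD0, mul_nonneg hc3 hD0, mul_nonneg hc4 hD0,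
      mul_nonneg hc5 hD0, mul_nonneg hc6 hD0]
  have hMA : 2 * c3 * D + 2 * c4 * D ≤ 2 * (c1 + c2 + c3 + c4 + c5 + c6) * D := by
    linarith [mul_nonneg hc1 hD0, mul_nonneg hc2 hD0,
      mul_nonneg hc5 hD0, mul_nonneg hc6 hD0]
  have hMB : 2 * c5 * D + 2 * c6 * D ≤ 2 * (c1 + c2 + c3 + c4 + c5 + c6) * D := by
    linarith [mul_nonneg hc1 hD0, mul_nonneg hc2 hD0,
      mul_nonneg hc3 hD0, mul_nonneg hc4 hD0]
  refine ⟨?_, ?_, ?_, ?_⟩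
  · exact bKA.trans (mul_le_mul_of_nonneg_right hM1 hsh0)
  · exact bKB.trans (mul_le_mul_of_nonneg_right hM2 hsh0)
  · calc ‖FA u p y‖ ≤ |Ar u p y| + |Ae u p y| := norm_comb_le _ _
      _ ≤ 2 * c3 * D * sh + 2 * c4 * D * sh := add_le_add bAr bAe
      _ = (2 * c3 * D + 2 * c4 * D) * sh := by ring
      _ ≤ 2 * (c1 + c2 + c3 + c4 + c5 + c6) * D * sh :=
          mul_le_mul_of_nonneg_right hMA hsh0
  · calc ‖FB u p y‖ ≤ |Br u p y| + |Be u p y| := norm_comb_le _ _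
      _ ≤ 2 * c5 * D * sh + 2 * c6 * D * sh := add_le_add bBr bBe
      _ = (2 * c5 * D + 2 * c6 * D) * sh := by ring
      _ ≤ 2 * (c1 + c2 + c3 + c4 + c5 + c6) * D * sh :=
          mul_le_mul_of_nonneg_right hMB hsh0
lemma cont_qq_y (p : ℝ × ℝ) : Continuous fun y => qq p y := by unfold qq; fun_prop

lemma cont_y_rpow {p : ℝ × ℝ} (hp : p.1 ≠ 0) (e : ℝ) : Continuous fun y => qq p y ^ e :=
  (cont_qq_y p).rpow_const fun y => Or.inl (qq_pos hp y).ne'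

lemma cont_y_KA (u : ℝ → ℝ) (hc : Continuous u) {p : ℝ × ℝ} (hp : p.1 ≠ 0) :
    Continuous fun y => KA u p y := by
  unfold KA
  exact continuous_const.mul
    (((continuous_id.sub continuous_const).mul (cont_y_rpow hp _)).mul hc)

lemma cont_y_KB (u : ℝ → ℝ) (hc : Continuous u) {p : ℝ × ℝ} (hp : p.1 ≠ 0) :
    Continuous fun y => KB u p y := by
  unfold KB
  exact continuous_const.mul ((cont_y_rpow hp _).mul hc)

lemma cont_y_FA (u : ℝ → ℝ) (hc : Continuous u) {p : ℝ × ℝ} (hp : p.1 ≠ 0) :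
    Continuous fun y => FA u p y := by
  have hAr : Continuous fun y => Ar u p y := by
    unfold Ar
    exact ((continuous_id.sub continuous_const).mul
      (((cont_y_rpow hp _).div_const 2).sub
        (continuous_const.mul (cont_y_rpow hp _)))).mul hc
  have hAe : Continuous fun y => Ae u p y := by
    unfold Ae
    exact (continuous_const.mul
      (((cont_y_rpow hp _).neg).add
        ((continuous_const.mul ((continuous_const.sub continuous_id).pow 2)).mul
          (cont_y_rpow hp _)))).mul hc
  exact (hAr.smul continuous_const).add (hAe.smul continuous_const)

lemma cont_y_FB (u : ℝ → ℝ) (hc : Continuous u) {p : ℝ × ℝ} (hp : p.1 ≠ 0) :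
    Continuous fun y => FB u p y := by
  have hBr : Continuous fun y => Br u p y := by
    unfold Br
    exact ((continuous_const.mul (cont_y_rpow hp _)).sub
      (continuous_const.mul (cont_y_rpow hp _))).mul hc
  have hBe : Continuous fun y => Be u p y := by
    unfold Be
    exact ((continuous_const.mul (continuous_const.mul
      (continuous_const.sub continuous_id))).mul (cont_y_rpow hp _)).mul hc
  exact (hBr.smul continuous_const).add (hBe.smul continuous_const)

lemma contAt_p_rpow {p₀ : ℝ × ℝ} (hp : p₀.1 ≠ 0) (y e : ℝ) :
    ContinuousAt (fun p : ℝ × ℝ => qq p y ^ e) p₀ := by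
  have hq : ContinuousAt (fun p : ℝ × ℝ => qq p y) p₀ := by
    apply Continuous.continuousAt; unfold qq; fun_prop
  exact hq.rpow_const (Or.inl (qq_pos hp y).ne')

lemma contAt_p_FA (u : ℝ → ℝ) {p₀ : ℝ × ℝ} (hp : p₀.1 ≠ 0) (y : ℝ) :
    ContinuousAt (fun p => FA u p y) p₀ := by
  have h1 : ContinuousAt (fun p : ℝ × ℝ => p.1) p₀ := continuous_fst.continuousAt
  have h2 : ContinuousAt (fun p : ℝ × ℝ => p.2) p₀ := continuous_snd.continuousAt
  have hAr : ContinuousAt (fun p => Ar u p y) p₀ := by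
    unfold Ar
    exact (((continuousAt_const.sub h2).mul
      (((contAt_p_rpow hp y _).div_const 2).sub
        ((continuousAt_const.mul (h1.pow 2)).mul (contAt_p_rpow hp y _)))).mul
      continuousAt_const)
  have hAe : ContinuousAt (fun p => Ae u p y) p₀ := by
    unfold Ae
    exact (((h1.div_const 2).mul
      (((contAt_p_rpow hp y _).neg).add
        ((continuousAt_const.mul ((h2.sub continuousAt_const).pow 2)).mul
          (contAt_p_rpow hp y _)))).mul continuousAt_const)
  exact (hAr.smul continuousAt_const).add (hAe.smul continuousAt_const)

lemma contAt_p_FB (u : ℝ → ℝ) {p₀ : ℝ × ℝ} (hp : p₀.1 ≠ 0) (y : ℝ) :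
    ContinuousAt (fun p => FB u p y) p₀ := by
  have h1 : ContinuousAt (fun p : ℝ × ℝ => p.1) p₀ := continuous_fst.continuousAt
  have h2 : ContinuousAt (fun p : ℝ × ℝ => p.2) p₀ := continuous_snd.continuousAt
  have hBr : ContinuousAt (fun p => Br u p y) p₀ := by
    unfold Br
    exact ((h1.mul (contAt_p_rpow hp y _)).sub
      ((continuousAt_const.mul (h1.pow 3)).mul (contAt_p_rpow hp y _))).mul
      continuousAt_const
  have hBe : ContinuousAt (fun p => Be u p y) p₀ := by
    unfold Be
    exact ((((h1.pow 2).div_const 2).mul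
      (continuousAt_const.mul (h2.sub continuousAt_const))).mul
      (contAt_p_rpow hp y _)).mul continuousAt_const
  exact (hBr.smul continuousAt_const).add (hBe.smul continuousAt_const)

lemma integrable_bound (η₀ M : ℝ) :
    Integrable (fun y : ℝ => M * (1 + (y - η₀) ^ 2) ^ (-(2 : ℝ) / 2)) := by
  have h := integrable_rpow_neg_one_add_norm_sq (E := ℝ) (μ := volume) (r := 2)
    (by rw [Module.finrank_self]; norm_num)
  have h2 := (h.comp_sub_right η₀).const_mul M
  simpa [Real.norm_eq_abs, sq_abs] using h2
lemma Ae_eq_Br (u : ℝ → ℝ) {p : ℝ × ℝ} (hp : p.1 ≠ 0) (y : ℝ) :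
    Ae u p y = Br u p y := by
  have hq := qq_pos hp y
  have key : qq p y * qq p y ^ (-(5 : ℝ) / 2) = qq p y ^ (-(3 : ℝ) / 2) := by
    rw [← Real.rpow_one_add' hq.le (by norm_num : (1 : ℝ) + -(5 : ℝ) / 2 ≠ 0)]
    norm_num
  have hsq : (p.2 - y) ^ 2 = qq p y - p.1 ^ 2 := by unfold qq; ring
  unfold Ae Br
  rw [hsq]
  linear_combination (3 / 2 * p.1 * u y) * key

lemma main_at (u : ℝ → ℝ) (hc : Continuous u) {C : ℝ} (hC : ∀ y, |u y| ≤ C)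
    {p₀ : ℝ × ℝ} (h : 0 < p₀.1) :
    HasFDerivAt (fun p => ∫ y : ℝ, KA u p y) (∫ y : ℝ, FA u p₀ y) p₀ ∧
    HasFDerivAt (fun p => ∫ y : ℝ, KB u p y) (∫ y : ℝ, FB u p₀ y) p₀ ∧
    Integrable (FA u p₀) ∧ Integrable (FB u p₀) := by
  obtain ⟨M, hM0, hM⟩ := all_bounds u hC h
  have hε : 0 < p₀.1 / 4 := by linarith
  have hball : Metric.ball p₀ (p₀.1 / 4) ∈ nhds p₀ := Metric.ball_mem_nhds _ hε
  have hbound := integrable_bound p₀.2 M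
  have hmem : p₀ ∈ Metric.ball p₀ (p₀.1 / 4) := Metric.mem_ball_self hε
  have hposball : ∀ p ∈ Metric.ball p₀ (p₀.1 / 4), p.1 ≠ 0 := fun p hp => by
    have := (ball_facts h hp).1; intro h0; rw [h0] at this; linarith
  have hIntFA : Integrable (FA u p₀) :=
    hbound.mono' (cont_y_FA u hc (hposball p₀ hmem)).aestronglyMeasurable
      (Filter.Eventually.of_forall fun y => (hM p₀ hmem y).2.2.1)
  have hIntFB : Integrable (FB u p₀) :=
    hbound.mono' (cont_y_FB u hc (hposball p₀ hmem)).aestronglyMeasurable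
      (Filter.Eventually.of_forall fun y => (hM p₀ hmem y).2.2.2)
  refine ⟨?_, ?_, hIntFA, hIntFB⟩
  · apply hasFDerivAt_integral_of_dominated_of_fderiv_le
      (F := fun p y => KA u p y) (F' := fun p y => FA u p y)
      (bound := fun y => M * (1 + (y - p₀.2) ^ 2) ^ (-(2 : ℝ) / 2)) hball
    · exact Filter.eventually_of_mem hball fun p hp =>
        (cont_y_KA u hc (hposball p hp)).aestronglyMeasurable
    · exact hbound.mono' (cont_y_KA u hc (hposball p₀ hmem)).aestronglyMeasurable
        (Filter.Eventually.of_forall fun y => by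
          rw [Real.norm_eq_abs]; exact (hM p₀ hmem y).1)
    · exact (cont_y_FA u hc (hposball p₀ hmem)).aestronglyMeasurable
    · exact Filter.Eventually.of_forall fun y p hp => (hM p hp y).2.2.1
    · exact hbound
    · exact Filter.Eventually.of_forall fun y p hp =>
        hasFDerivAt_KA u (hposball p hp) y
  · apply hasFDerivAt_integral_of_dominated_of_fderiv_le
      (F := fun p y => KB u p y) (F' := fun p y => FB u p y)
      (bound := fun y => M * (1 + (y - p₀.2) ^ 2) ^ (-(2 : ℝ) / 2)) hball
    · exact Filter.eventually_of_mem hball fun p hp =>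
        (cont_y_KB u hc (hposball p hp)).aestronglyMeasurable
    · exact hbound.mono' (cont_y_KB u hc (hposball p₀ hmem)).aestronglyMeasurable
        (Filter.Eventually.of_forall fun y => by
          rw [Real.norm_eq_abs]; exact (hM p₀ hmem y).2.1)
    · exact (cont_y_FB u hc (hposball p₀ hmem)).aestronglyMeasurable
    · exact Filter.Eventually.of_forall fun y p hp => (hM p hp y).2.2.2
    · exact hbound
    · exact Filter.Eventually.of_forall fun y p hp =>
        hasFDerivAt_KB u (hposball p hp) y

lemma contAt_intFA (u : ℝ → ℝ) (hc : Continuous u) {C : ℝ} (hC : ∀ y, |u y| ≤ C)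
    {p₀ : ℝ × ℝ} (h : 0 < p₀.1) :
    ContinuousAt (fun p => ∫ y : ℝ, FA u p y) p₀ := by
  obtain ⟨M, hM0, hM⟩ := all_bounds u hC h
  have hε : 0 < p₀.1 / 4 := by linarith
  have hball : Metric.ball p₀ (p₀.1 / 4) ∈ nhds p₀ := Metric.ball_mem_nhds _ hε
  have hposball : ∀ p ∈ Metric.ball p₀ (p₀.1 / 4), p.1 ≠ 0 := fun p hp => by
    have := (ball_facts h hp).1; intro h0; rw [h0] at this; linarith
  exact continuousAt_of_dominated
    (Filter.eventually_of_mem hball fun p hp =>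
      (cont_y_FA u hc (hposball p hp)).aestronglyMeasurable)
    (Filter.eventually_of_mem hball fun p hp =>
      Filter.Eventually.of_forall fun y => (hM p hp y).2.2.1)
    (integrable_bound p₀.2 M)
    (Filter.Eventually.of_forall fun y => contAt_p_FA u h.ne' y)

lemma contAt_intFB (u : ℝ → ℝ) (hc : Continuous u) {C : ℝ} (hC : ∀ y, |u y| ≤ C)
    {p₀ : ℝ × ℝ} (h : 0 < p₀.1) :
    ContinuousAt (fun p => ∫ y : ℝ, FB u p y) p₀ := by
  obtain ⟨M, hM0, hM⟩ := all_bounds u hC h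
  have hε : 0 < p₀.1 / 4 := by linarith
  have hball : Metric.ball p₀ (p₀.1 / 4) ∈ nhds p₀ := Metric.ball_mem_nhds _ hε
  have hposball : ∀ p ∈ Metric.ball p₀ (p₀.1 / 4), p.1 ≠ 0 := fun p hp => by
    have := (ball_facts h hp).1; intro h0; rw [h0] at this; linarith
  exact continuousAt_of_dominated
    (Filter.eventually_of_mem hball fun p hp =>
      (cont_y_FB u hc (hposball p hp)).aestronglyMeasurable)
    (Filter.eventually_of_mem hball fun p hp =>
      Filter.Eventually.of_forall fun y => (hM p hp y).2.2.2)
    (integrable_bound p₀.2 M)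
    (Filter.Eventually.of_forall fun y => contAt_p_FB u h.ne' y)
end JoyceAux
end JoyceAux

open JoyceAux

/-- The smeared Joyce solutions are C¹ on the upper half-plane and satisfy the
Joyce equation. -/
theorem smeared_joyce_solution (u : ℝ → ℝ) (hc : Continuous u)
    (hb : ∃ C : ℝ, ∀ y : ℝ, |u y| ≤ C) :
    ContDiffOn ℝ 1 (fun p : ℝ × ℝ => smearedA u p.1 p.2) {p : ℝ × ℝ | 0 < p.1} ∧
    ContDiffOn ℝ 1 (fun p : ℝ × ℝ => smearedB u p.1 p.2) {p : ℝ × ℝ | 0 < p.1} ∧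
    ∀ ρ η : ℝ, 0 < ρ →
      ρ * (pdr (smearedA u) ρ η + pde (smearedB u) ρ η) = smearedA u ρ η ∧
      pde (smearedA u) ρ η = pdr (smearedB u) ρ η := by
  obtain ⟨C, hC⟩ := hb
  have hopen : IsOpen {p : ℝ × ℝ | 0 < p.1} := isOpen_lt continuous_const continuous_fst
  have hA2 : (fun p : ℝ × ℝ => smearedA u p.1 p.2) = fun p => ∫ y : ℝ, KA u p y := by
    funext p
    rw [smearedA, ← MeasureTheory.integral_const_mul]
    rfl
  have hB2 : (fun p : ℝ × ℝ => smearedB u p.1 p.2) = fun p => ∫ y : ℝ, KB u p y := by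
    funext p
    rw [smearedB, ← MeasureTheory.integral_const_mul]
    rfl
  have hdA : ∀ p : ℝ × ℝ, 0 < p.1 →
      HasFDerivAt (fun p => ∫ y : ℝ, KA u p y) (∫ y : ℝ, FA u p y) p :=
    fun p hp => (main_at u hc hC hp).1
  have hdB : ∀ p : ℝ × ℝ, 0 < p.1 →
      HasFDerivAt (fun p => ∫ y : ℝ, KB u p y) (∫ y : ℝ, FB u p y) p :=
    fun p hp => (main_at u hc hC hp).2.1
  refine ⟨?_, ?_, ?_⟩
  · rw [hA2, show (1 : WithTop ℕ∞) = 0 + 1 by norm_num]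
    apply (contDiffOn_succ_iff_fderiv_of_isOpen hopen).mpr
    refine ⟨fun p hp => ((hdA p hp).differentiableAt).differentiableWithinAt, ?_, ?_⟩
    · intro hcontra; exact absurd hcontra (by norm_num)
    · rw [contDiffOn_zero]
      exact ContinuousOn.congr
        (fun p hp => ((contAt_intFA u hc hC hp).continuousWithinAt))
        (fun p hp => (hdA p hp).fderiv)
  · rw [hB2, show (1 : WithTop ℕ∞) = 0 + 1 by norm_num]
    apply (contDiffOn_succ_iff_fderiv_of_isOpen hopen).mpr
    refine ⟨fun p hp => ((hdB p hp).differentiableAt).differentiableWithinAt, ?_, ?_⟩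
    · intro hcontra; exact absurd hcontra (by norm_num)
    · rw [contDiffOn_zero]
      exact ContinuousOn.congr
        (fun p hp => ((contAt_intFB u hc hC hp).continuousWithinAt))
        (fun p hp => (hdB p hp).fderiv)
  · intro ρ η hρ
    have hp1 : (0 : ℝ) < ((ρ, η) : ℝ × ℝ).1 := hρ
    obtain ⟨hA, hB, hIA, hIB⟩ := main_at u hc hC hp1
    have hlineA1 : HasDerivAt (fun r => ∫ y : ℝ, KA u (r, η) y)
        ((∫ y : ℝ, FA u (ρ, η) y) (1, 0)) ρ := by
      have := hA.comp_hasDerivAt ρ ((hasDerivAt_id ρ).prodMk (hasDerivAt_const ρ η))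
      exact this
    have hlineA2 : HasDerivAt (fun e => ∫ y : ℝ, KA u (ρ, e) y)
        ((∫ y : ℝ, FA u (ρ, η) y) (0, 1)) η := by
      have := hA.comp_hasDerivAt η ((hasDerivAt_const η ρ).prodMk (hasDerivAt_id η))
      exact this
    have hlineB1 : HasDerivAt (fun r => ∫ y : ℝ, KB u (r, η) y)
        ((∫ y : ℝ, FB u (ρ, η) y) (1, 0)) ρ := by
      have := hB.comp_hasDerivAt ρ ((hasDerivAt_id ρ).prodMk (hasDerivAt_const ρ η))
      exact this
    have hlineB2 : HasDerivAt (fun e => ∫ y : ℝ, KB u (ρ, e) y)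
        ((∫ y : ℝ, FB u (ρ, η) y) (0, 1)) η := by
      have := hB.comp_hasDerivAt η ((hasDerivAt_const η ρ).prodMk (hasDerivAt_id η))
      exact this
    have hpdrA : pdr (smearedA u) ρ η = (∫ y : ℝ, FA u (ρ, η) y) (1, 0) := by
      have hfun : (fun r => smearedA u r η) = fun r => ∫ y : ℝ, KA u (r, η) y := by
        funext r; exact congrFun hA2 (r, η)
      rw [pdr, hfun]; exact hlineA1.deriv
    have hpdeA : pde (smearedA u) ρ η = (∫ y : ℝ, FA u (ρ, η) y) (0, 1) := by
      have hfun : (fun e => smearedA u ρ e) = fun e => ∫ y : ℝ, KA u (ρ, e) y := by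
        funext e; exact congrFun hA2 (ρ, e)
      rw [pde, hfun]; exact hlineA2.deriv
    have hpdrB : pdr (smearedB u) ρ η = (∫ y : ℝ, FB u (ρ, η) y) (1, 0) := by
      have hfun : (fun r => smearedB u r η) = fun r => ∫ y : ℝ, KB u (r, η) y := by
        funext r; exact congrFun hB2 (r, η)
      rw [pdr, hfun]; exact hlineB1.deriv
    have hpdeB : pde (smearedB u) ρ η = (∫ y : ℝ, FB u (ρ, η) y) (0, 1) := by
      have hfun : (fun e => smearedB u ρ e) = fun e => ∫ y : ℝ, KB u (ρ, e) y := by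
        funext e; exact congrFun hB2 (ρ, e)
      rw [pde, hfun]; exact hlineB2.deriv
    have hApp : ∀ v : ℝ × ℝ, (∫ y : ℝ, FA u (ρ, η) y) v = ∫ y : ℝ, (FA u (ρ, η) y) v :=
      fun v => ContinuousLinearMap.integral_apply hIA v
    have hAppB : ∀ v : ℝ × ℝ, (∫ y : ℝ, FB u (ρ, η) y) v = ∫ y : ℝ, (FB u (ρ, η) y) v :=
      fun v => ContinuousLinearMap.integral_apply hIB v
    constructor
    · rw [hpdrA, hpdeB, hApp (1, 0), hAppB (0, 1)]
      have hIA1 : Integrable (fun y => (FA u (ρ, η) y) (1, 0)) :=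
        hIA.apply_continuousLinearMap _
      have hIB2 : Integrable (fun y => (FB u (ρ, η) y) (0, 1)) :=
        hIB.apply_continuousLinearMap _
      rw [← MeasureTheory.integral_add hIA1 hIB2, ← MeasureTheory.integral_const_mul]
      have e2 : smearedA u ρ η = ∫ y : ℝ, KA u (ρ, η) y := congrFun hA2 (ρ, η)
      rw [e2]
      apply MeasureTheory.integral_congr_ae
      apply Filter.Eventually.of_forall
      intro y
      simp only [FA, FB, comb_apply, KA, Ar, Be]
      ring
    · rw [hpdeA, hpdrB, hApp (0, 1), hAppB (1, 0)]
      have heq : (fun y => (FA u (ρ, η) y) (0, 1)) = fun y => (FB u (ρ, η) y) (1, 0) := by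
        funext y
        simp only [FA, FB, comb_apply]
        have := Ae_eq_Br u (show ((ρ, η) : ℝ × ℝ).1 ≠ 0 from hρ.ne') y
        simp only [this]
        ring
      rw [heq]
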